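/- The pop-stack operator P sorts a permutation in one pass if and only if the permutation is layered, i.e., avoids both patterns 231 and 312: P(π) is the identity iff π contains no indices i<j<k with π(k)<π(i)<π(j) and no indices i<j<k with π(j)<π(k)<π(i). -/

import Mathlib

/-- Flip operator `F`: simultaneously reverse every (automatically pairwise disjoint)
`10` factor, i.e. every zero immediately preceded by a one swaps with that one.
Here `false` plays the role of `0` and `true` of `1`. -/
def flipWord : List Bool → List Bool
  | true :: false :: rest => false :: true :: flipWord rest
  | a :: rest => a :: flipWord rest
  | [] => []

/-- The positions (indices) of the zeros (`false`) of a binary word, left to right. -/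
def zeroPositions (w : List Bool) : List ℕ :=
  (List.range w.length).filter (fun i => w.getD i true = false)

/-- `u ⊴ v` : for every `i`, the `i`-th zero of `u` occurs at a position at most
that of the `i`-th zero of `v`. -/
def WLE (u v : List Bool) : Prop :=
  List.Forall₂ (· ≤ ·) (zeroPositions u) (zeroPositions v)

/-- One tumble move: choose pairwise non-overlapping factors of the form `1^+0^+`
covering every `10` factor, and reverse each in place. `Tumble w u` means `u ∈ T(w)`. -/
inductive Tumble : List Bool → List Bool → Prop
  | nil : Tumble [] []
  | zero {w u} : Tumble w u → Tumble (false :: w) (false :: u)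
  | one {w u} : Tumble w u → w.head? ≠ some false → Tumble (true :: w) (true :: u)
  | block {w u} (a b : ℕ) : 0 < a → 0 < b → Tumble w u →
      Tumble (List.replicate a true ++ List.replicate b false ++ w)
             (List.replicate b false ++ List.replicate a true ++ u)

/-- `TumbleN t w u` : `u` is reachable from `w` by exactly `t` tumble moves. -/
def TumbleN : ℕ → List Bool → List Bool → Prop
  | 0 => Eq
  | t + 1 => fun w u => ∃ v, TumbleN t w v ∧ Tumble v u

/-- The 0/1 projection at threshold `k`: the `i`-th letter is `0` iff `w(i) < k`. -/
def proj (k : ℕ) (w : List ℕ) : List Bool := w.map (fun x => decide (k ≤ x))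

/-- Pop-stack operator `P`: partition into maximal strictly decreasing runs and
reverse each run in place. -/
def popStack (w : List ℕ) : List ℕ :=
  ((w.splitBy (fun a b => decide (b < a))).map List.reverse).flatten


namespace Stmt17
open List

open List

theorem loop_append {α : Type*} (R : α → α → Bool) :
    ∀ (l : List α) (a : α) (g : List α) (gs : List (List α)),
      splitBy.loop R l a g gs = gs.reverse ++ splitBy.loop R l a g []
  | [], a, g, gs => by simp [splitBy.loop]
  | b :: l, a, g, gs => by
      rw [splitBy.loop, splitBy.loop]
      cases h : R a b
      · simp only [h]
        rw [loop_append R l b [] ((a :: g).reverse :: gs),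
            loop_append R l b [] [(a :: g).reverse]]
        simp
      · simp only [h]
        exact loop_append R l b (a :: g) gs

theorem loop_block {α : Type*} (R : α → α → Bool) :
    ∀ (xs l₂ : List α) (ag : α) (g : List α) (gs : List (List α)),
      Chain' (fun a b => R a b = true) (ag :: xs) →
      (∀ z y, (ag :: xs).getLast? = some z → l₂.head? = some y → R z y = false) →
      splitBy.loop R (xs ++ l₂) ag g gs
        = gs.reverse ++ (g.reverse ++ ag :: xs) :: splitBy R l₂
  | [], l₂, ag, g, gs, _, hb => by
      cases l₂ with
      | nil => simp [splitBy.loop, splitBy]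
      | cons y t =>
          have h0 : R ag y = false := hb ag y (by simp) (by simp)
          rw [nil_append, splitBy.loop]
          simp only [h0]
          rw [loop_append R t y [] ((ag :: g).reverse :: gs)]
          simp [splitBy]
  | b :: bs, l₂, ag, g, gs, hc, hb => by
      have h1 : R ag b = true := (isChain_cons_cons.1 hc).1
      rw [cons_append, splitBy.loop]
      simp only [h1]
      rw [loop_block R bs l₂ b (ag :: g) gs (isChain_cons_cons.1 hc).2
        (fun z y hz hy => hb z y (by rw [getLast?_cons_cons]; exact hz) hy)]
      simp

theorem splitBy_block {α : Type*} (R : α → α → Bool) (l₁ l₂ : List α)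
    (h1 : l₁ ≠ []) (hc : Chain' (fun a b => R a b = true) l₁)
    (hb : ∀ z y, l₁.getLast? = some z → l₂.head? = some y → R z y = false) :
    splitBy R (l₁ ++ l₂) = l₁ :: splitBy R l₂ := by
  cases l₁ with
  | nil => exact absurd rfl h1
  | cons a xs =>
      rw [cons_append, splitBy]
      rw [loop_block R xs l₂ a [] [] hc hb]
      simp



open List



inductive Layered : ℕ → List ℕ → Prop
  | nil (s) : Layered s []
  | cons (s a : ℕ) {l : List ℕ} : Layered (s + a) l →
      Layered s ((List.range' s a).reverse ++ l)

theorem Layered.le_of_mem {s₀ : ℕ} {l₀ : List ℕ} (h : Layered s₀ l₀) :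
    ∀ x ∈ l₀, s₀ ≤ x := by
  induction h with
  | nil => simp
  | cons s a hl ih =>
      rename_i l
      intro x hx
      rcases mem_append.1 hx with hx | hx
      · exact ((mem_range'_1).1 (mem_reverse.1 hx)).1
      · exact le_trans (Nat.le_add_right s a) (ih x hx)

theorem popStack_layered {s₀ : ℕ} {l₀ : List ℕ} (h : Layered s₀ l₀) :
    popStack l₀ = range' s₀ l₀.length := by
  induction h with
  | nil => simp [popStack, splitBy]
  | cons s a hl ih =>
      rename_i l
      rcases Nat.eq_zero_or_pos a with rfl | ha
      · simpa using ih
      · have hblock : splitBy (fun a b => decide (b < a)) ((range' s a).reverse ++ l)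
            = (range' s a).reverse :: splitBy (fun a b => decide (b < a)) l := by
          apply splitBy_block
          · simp
            omega
          · apply Pairwise.isChain
            rw [pairwise_reverse]
            have := pairwise_lt_range' (s := s) (n := a)
            exact this.imp (fun h => by simpa using h)
          · intro z y hz hy
            rw [getLast?_reverse] at hz
            obtain ⟨a', rfl⟩ : ∃ a', a = a' + 1 := ⟨a - 1, by omega⟩
            rw [range'_succ] at hz
            simp at hz
            subst hz
            have hy' : s + (a' + 1) ≤ y :=
              hl.le_of_mem y (mem_of_mem_head? (Option.mem_def.2 hy))
            simp
            omega
        rw [popStack, hblock]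
        simp only [map_cons, flatten_cons, reverse_reverse]
        rw [show ((splitBy (fun a b => decide (b < a)) l).map List.reverse).flatten
            = popStack l from rfl, ih]
        have hra : range' s a ++ range' (s + a) l.length = range' s (l.length + a) := by
          have := range'_append (s := s) (m := a) (n := l.length) (step := 1)
          simp only [Nat.one_mul] at this; rw [Nat.add_comm l.length a]; exact this
        rw [hra]
        simp [Nat.add_comm]

theorem layered_of_flatten :
    ∀ (G : List (List ℕ)) (s m : ℕ),
      (G.map List.reverse).flatten = range' s m → Layered s G.flatten
  | [], s, m, _ => by simpa using Layered.nil s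
  | g :: G', s, m, h => by
      rw [map_cons, flatten_cons] at h
      have hlen : g.length + ((G'.map List.reverse).flatten).length = m := by
        have := congrArg length h
        simpa using this
      have hsplit : range' s m = range' s g.length ++ range' (s + g.length) (m - g.length) := by
        rw [show s + g.length = s + 1 * g.length by ring, range'_append]
        congr 1
        omega
      rw [hsplit] at h
      obtain ⟨h1, h2⟩ := append_inj h (by simp)
      rw [flatten_cons]
      have hL : Layered s ((range' s g.length).reverse ++ G'.flatten) :=
        Layered.cons s g.length (layered_of_flatten G' _ _ h2)
      rwa [← h1, reverse_reverse] at hL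

theorem layered_of_popStack {s m : ℕ} {l : List ℕ}
    (h : popStack l = range' s m) : Layered s l := by
  have := layered_of_flatten (splitBy (fun a b => decide (b < a)) l) s m h
  rwa [flatten_splitBy] at this


open List

theorem single_sub (l : List ℕ) (i : ℕ) (h : i < l.length) : [l.getD i 0] <+ l := by
  rw [List.getD_eq_getElem l 0 h]
  exact List.singleton_sublist.2 (List.getElem_mem h)

theorem pair_sub : ∀ (l : List ℕ) (i j : ℕ), i < j → j < l.length →
    [l.getD i 0, l.getD j 0] <+ l
  | _, _, 0, hij, _ => absurd hij (Nat.not_lt_zero _)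
  | [], _, _, _, hj => absurd hj (by simp)
  | a :: l, 0, j + 1, _, hj => by
      simp only [List.getD_cons_zero, List.getD_cons_succ]
      exact (single_sub l j (by simpa using hj)).cons₂ a
  | a :: l, i + 1, j + 1, hij, hj => by
      simp only [List.getD_cons_succ]
      exact (pair_sub l i j (by omega) (by simpa using hj)).cons a

theorem triple_sub : ∀ (l : List ℕ) (i j k : ℕ), i < j → j < k → k < l.length →
    [l.getD i 0, l.getD j 0, l.getD k 0] <+ l
  | _, _, _, 0, _, hjk, _ => absurd hjk (Nat.not_lt_zero _)
  | [], _, _, _, _, _, hk => absurd hk (by simp)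
  | a :: l, 0, j + 1, k + 1, _, hjk, hk => by
      simp only [List.getD_cons_zero, List.getD_cons_succ]
      exact (pair_sub l j k (by omega) (by simpa using hk)).cons₂ a
  | a :: l, i + 1, j + 1, k + 1, hij, hjk, hk => by
      simp only [List.getD_cons_succ]
      exact (triple_sub l i j k (by omega) (by omega) (by simpa using hk)).cons a
  | a :: l, 0, 0, k + 1, hij, _, _ => absurd hij (by omega)
  | a :: l, i + 1, 0, k + 1, hij, _, _ => absurd hij (by omega)

theorem pat_iff (P : ℕ → ℕ → ℕ → Prop) (l : List ℕ) :
    (∃ i j k, i < j ∧ j < k ∧ k < l.length ∧ P (l.getD i 0) (l.getD j 0) (l.getD k 0)) ↔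
      ∃ x y z, [x, y, z] <+ l ∧ P x y z := by
  constructor
  · rintro ⟨i, j, k, hij, hjk, hk, hp⟩
    exact ⟨_, _, _, triple_sub l i j k hij hjk hk, hp⟩
  · rintro ⟨x, y, z, hs, hp⟩
    rw [sublist_iff_exists_fin_orderEmbedding_get_eq] at hs
    obtain ⟨f, hf⟩ := hs
    have h01 : f ⟨0, by simp⟩ < f ⟨1, by simp⟩ := f.strictMono (by simp [Fin.lt_def])
    have h12 : f ⟨1, by simp⟩ < f ⟨2, by simp⟩ := f.strictMono (by simp [Fin.lt_def])
    refine ⟨f ⟨0, by simp⟩, f ⟨1, by simp⟩, f ⟨2, by simp⟩, h01, h12,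
      (f ⟨2, by simp⟩).isLt, ?_⟩
    have e0 := hf ⟨0, by simp⟩
    have e1 := hf ⟨1, by simp⟩
    have e2 := hf ⟨2, by simp⟩
    simp only [List.get_eq_getElem] at e0 e1 e2
    rw [List.getD_eq_getElem l 0 (f ⟨0, by simp⟩).isLt,
        List.getD_eq_getElem l 0 (f ⟨1, by simp⟩).isLt,
        List.getD_eq_getElem l 0 (f ⟨2, by simp⟩).isLt]
    simp only [show ((⟨0, by simp⟩ : Fin [x,y,z].length):ℕ) = 0 from rfl,
      show ((⟨1, by simp⟩ : Fin [x,y,z].length):ℕ) = 1 from rfl,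
      show ((⟨2, by simp⟩ : Fin [x,y,z].length):ℕ) = 2 from rfl,
      List.getElem_cons_zero, List.getElem_cons_succ] at e0 e1 e2
    rw [← e0, ← e1, ← e2]
    exact hp


def Pat231 (l : List ℕ) : Prop := ∃ x y z : ℕ, [x, y, z] <+ l ∧ z < x ∧ x < y
def Pat312 (l : List ℕ) : Prop := ∃ x y z : ℕ, [x, y, z] <+ l ∧ y < z ∧ z < x

theorem sublist3_append {x y z : ℕ} {L₁ L₂ : List ℕ} (h : [x, y, z] <+ L₁ ++ L₂) :
    [x, y, z] <+ L₂ ∨ (x ∈ L₁ ∧ [y, z] <+ L₂) ∨ ([x, y] <+ L₁ ∧ z ∈ L₂) ∨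
      [x, y, z] <+ L₁ := by
  rw [sublist_append_iff] at h
  obtain ⟨u, v, huv, hu, hv⟩ := h
  rcases u with _ | ⟨a1, _ | ⟨a2, _ | ⟨a3, _ | ⟨a4, u⟩⟩⟩⟩
  · simp only [nil_append] at huv
    subst huv; exact Or.inl hv
  · simp only [cons_append, nil_append, cons.injEq] at huv
    obtain ⟨rfl, huv⟩ := huv
    rw [← huv] at hv
    exact Or.inr (Or.inl ⟨singleton_sublist.1 hu, hv⟩)
  · simp only [cons_append, nil_append, cons.injEq] at huv
    obtain ⟨rfl, rfl, huv⟩ := huv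
    rw [← huv] at hv
    exact Or.inr (Or.inr (Or.inl ⟨hu, singleton_sublist.1 hv⟩))
  · simp only [cons_append, nil_append, cons.injEq] at huv
    obtain ⟨rfl, rfl, rfl, -⟩ := huv
    exact Or.inr (Or.inr (Or.inr hu))
  · have := congrArg length huv; simp at this

theorem layered_not_pat {s₀ : ℕ} {l₀ : List ℕ} (h : Layered s₀ l₀) :
    ¬ Pat231 l₀ ∧ ¬ Pat312 l₀ := by
  induction h with
  | nil =>
      constructor <;> rintro ⟨x, y, z, hs, -⟩ <;> simp at hs
  | cons s a hl ih =>
      rename_i l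
      have hB : ∀ x ∈ (range' s a).reverse, x < s + a := fun x hx =>
        (mem_range'_1.1 (mem_reverse.1 hx)).2
      have hBp : ((range' s a).reverse).Pairwise (· > ·) := by
        rw [pairwise_reverse]; exact pairwise_lt_range' (s := s) (n := a)
      have hl' : ∀ x ∈ l, s + a ≤ x := hl.le_of_mem
      constructor
      · rintro ⟨x, y, z, hs, hzx, hxy⟩
        rcases sublist3_append hs with h | ⟨hx, h⟩ | ⟨h, hz⟩ | h
        · exact ih.1 ⟨x, y, z, h, hzx, hxy⟩
        · have := hB x hx
          have := hl' z (h.subset (by simp))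
          omega
        · have := pairwise_iff_forall_sublist.1 hBp h
          omega
        · have := pairwise_iff_forall_sublist.1 hBp
            (Sublist.trans (show [x, y] <+ [x, y, z] by simp) h)
          omega
      · rintro ⟨x, y, z, hs, hyz, hzx⟩
        rcases sublist3_append hs with h | ⟨hx, h⟩ | ⟨h, hz⟩ | h
        · exact ih.2 ⟨x, y, z, h, hyz, hzx⟩
        · have := hB x hx
          have := hl' z (h.subset (by simp))
          omega
        · have := hB x (h.subset (by simp))
          have := hl' z hz
          omega
        · have := pairwise_iff_forall_sublist.1 hBp
            (Sublist.trans (show [y, z] <+ [x, y, z] by simp) h)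
          omega

instance : IsAntisymm ℕ (· > ·) := ⟨fun a b h h' => absurd h (lt_asymm h')⟩

theorem dropWhile_head_false {α : Type*} {p : α → Bool} :
    ∀ {l : List α} {b : α} {t : List α}, l.dropWhile p = b :: t → p b = false := by
  intro l
  induction l with
  | nil => intro b t h; simp at h
  | cons x xs ih =>
      intro b t h
      rw [dropWhile_cons] at h
      by_cases hx : p x
      · simp [hx] at h; exact ih h
      · simp [hx] at h
        rw [h.1] at hx
        simpa using hx

theorem layered_of_avoid :
    ∀ (n s : ℕ) (l : List ℕ), l.Perm (range' s n) → ¬ Pat231 l → ¬ Pat312 l →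
      Layered s l := by
  intro n
  induction n using Nat.strong_induction_on with
  | _ n ih =>
    intro s l hperm h231 h312
    cases l with
    | nil => exact Layered.nil s
    | cons a t =>
      have hnd : (a :: t).Nodup := hperm.nodup_iff.2 (nodup_range' (s := s) (n := n))
      have hmem : ∀ x ∈ a :: t, s ≤ x ∧ x < s + n := fun x hx =>
        mem_range'_1.1 (hperm.subset hx)
      have ha : s ≤ a ∧ a < s + n := hmem a (by simp)
      set l₁ := t.takeWhile (fun x => decide (x < a)) with hl₁def
      set l₂ := t.dropWhile (fun x => decide (x < a)) with hl₂def
      have ht : l₁ ++ l₂ = t := takeWhile_append_dropWhile (l := t)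
      have hanott : a ∉ t := (nodup_cons.1 hnd).1
      have htnd : t.Nodup := (nodup_cons.1 hnd).2
      have h₁small : ∀ x ∈ l₁, x < a := fun x hx => by
        simpa using mem_takeWhile_imp hx
      -- every element of l₂ is > a
      have h₂big : ∀ y ∈ l₂, a < y := by
        cases hdw : l₂ with
        | nil => simp
        | cons b t₂ =>
          have hraw := dropWhile_head_false (hl₂def ▸ hdw)
          rw [decide_eq_false_iff_not] at hraw
          have hbnlt : ¬ b < a := hraw
          have hbt : b ∈ t := by
            have : b ∈ l₂ := by rw [hdw]; simp
            exact (dropWhile_sublist _).subset (hl₂def ▸ this)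
          have hba : a < b := by
            rcases Nat.lt_or_ge a b with h | h
            · exact h
            · have : b ≠ a := fun hh => hanott (hh ▸ hbt)
              omega
          intro y hy
          rw [mem_cons] at hy
          rcases hy with rfl | hy
          · exact hba
          · by_contra hya
            have hya' : y < a := by
              have : y ∈ t := by
                have : y ∈ l₂ := by rw [hdw]; simp [hy]
                exact (dropWhile_sublist _).subset (hl₂def ▸ this)
              have : y ≠ a := fun hh => hanott (hh ▸ this)
              omega
            apply h231
            refine ⟨a, b, y, ?_, hya', hba⟩
            have h1 : [b, y] <+ b :: t₂ := (singleton_sublist.2 hy).cons₂ b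
            have h2 : [b, y] <+ t := by
              rw [← ht, hdw]
              exact h1.trans (sublist_append_right l₁ _)
            exact h2.cons₂ a
      -- l₁ is strictly decreasing
      have h₁sorted : l₁.Pairwise (· > ·) := by
        rw [pairwise_iff_forall_sublist]
        intro p q hpq
        have hp : p < a := h₁small p (hpq.subset (by simp))
        have hq : q < a := h₁small q (hpq.subset (by simp))
        have hl₁nd : l₁.Nodup := htnd.sublist (takeWhile_sublist _)
        have hpq' : p ≠ q := pairwise_iff_forall_sublist.1 hl₁nd hpq
        by_contra hc
        apply h312
        refine ⟨a, p, q, ?_, by omega, hq⟩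
        have : [p, q] <+ t := by
          rw [← ht]
          exact hpq.trans (sublist_append_left l₁ l₂)
        exact this.cons₂ a
      -- split the range
      have hb : a - s < n := by omega
      have hn0 : 0 < n := by omega
      obtain ⟨m, hm⟩ : ∃ m, n - (a - s) = m + 1 := ⟨n - (a - s) - 1, by omega⟩
      have hrange : range' s n = range' s (a - s) ++ a :: range' (a + 1) m := by
        have h1 : range' s n = range' s (a - s) ++ range' (s + (a - s)) (n - (a - s)) := by
          rw [show s + (a - s) = s + 1 * (a - s) by ring, range'_append]
          congr 1
          omega
        rw [h1, hm, range'_succ, show s + (a - s) = a by omega]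
      have hperm2 : (l₁ ++ l₂).Perm (range' s (a - s) ++ range' (a + 1) (m)) := by
        have h1 : (a :: (l₁ ++ l₂)).Perm (range' s n) := by rw [ht]; exact hperm
        rw [hrange] at h1
        have h2 := h1.trans perm_middle
        exact h2.cons_inv
      have hp1 : l₁.Perm (range' s (a - s)) := by
        rw [perm_iff_count]
        intro v
        have hc := perm_iff_count.1 hperm2 v
        rw [count_append, count_append] at hc
        rcases Nat.lt_or_ge v a with hv | hv
        · have e1 : count v l₂ = 0 := count_eq_zero.2 (fun hm => absurd (h₂big v hm) (by omega))
          have e2 : count v (range' (a + 1) (m)) = 0 :=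
            count_eq_zero.2 (fun hm => by have := (mem_range'_1.1 hm).1; omega)
          omega
        · have e1 : count v l₁ = 0 := count_eq_zero.2 (fun hm => absurd (h₁small v hm) (by omega))
          have e2 : count v (range' s (a - s)) = 0 :=
            count_eq_zero.2 (fun hm => by have := (mem_range'_1.1 hm).2; omega)
          omega
      have hp2 : l₂.Perm (range' (a + 1) (m)) := by
        rw [perm_iff_count]
        intro v
        have hc := perm_iff_count.1 hperm2 v
        rw [count_append, count_append] at hc
        rcases Nat.lt_or_ge v a with hv | hv
        · have e1 : count v l₂ = 0 := count_eq_zero.2 (fun hm => absurd (h₂big v hm) (by omega))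
          have e2 : count v (range' (a + 1) (m)) = 0 :=
            count_eq_zero.2 (fun hm => by have := (mem_range'_1.1 hm).1; omega)
          omega
        · have e1 : count v l₁ = 0 := count_eq_zero.2 (fun hm => absurd (h₁small v hm) (by omega))
          have e2 : count v (range' s (a - s)) = 0 :=
            count_eq_zero.2 (fun hm => by have := (mem_range'_1.1 hm).2; omega)
          omega
      -- identify l₁
      have hl₁eq : l₁ = (range' s (a - s)).reverse := by
        apply fun (hp : l₁ ~ _) (h1 : Pairwise (· > ·) l₁) (h2 : Pairwise (· > ·) _) => Perm.eq_of_pairwise' h1 h2 hp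
        · exact hp1.trans (reverse_perm _).symm
        · exact h₁sorted
        · exact pairwise_reverse.2 (pairwise_lt_range' (s := s) (n := a - s))
      -- recurse on l₂
      have hsub₂ : l₂ <+ a :: t := (dropWhile_sublist _).trans (sublist_cons_self a t)
      have h231' : ¬ Pat231 l₂ := by
        rintro ⟨x, y, z, hs, hp⟩
        exact h231 ⟨x, y, z, hs.trans hsub₂, hp⟩
      have h312' : ¬ Pat312 l₂ := by
        rintro ⟨x, y, z, hs, hp⟩
        exact h312 ⟨x, y, z, hs.trans hsub₂, hp⟩
      have hl₂lay : Layered (a + 1) l₂ := ih m (by omega) (a + 1) l₂ hp2 h231' h312'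
      have hfin : a :: t = (range' s (a - s + 1)).reverse ++ l₂ := by
        rw [range'_concat, reverse_append]
        simp only [reverse_cons, reverse_nil, nil_append]
        rw [show s + 1 * (a - s) = a by omega, ← hl₁eq, ← ht]
        simp
      rw [hfin]
      refine Layered.cons s (a - s + 1) ?_
      rw [show s + (a - s + 1) = a + 1 by omega]
      exact hl₂lay

end Stmt17

/-- `P` sorts `π` in one pass iff `π` avoids both `231` and `312`. -/
theorem stmt17 (n : ℕ) (π : List ℕ) (h : π.Perm (List.range' 1 n)) :
    popStack π = List.range' 1 n ↔
      (¬ ∃ i j k, i < j ∧ j < k ∧ k < π.length ∧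
          π.getD k 0 < π.getD i 0 ∧ π.getD i 0 < π.getD j 0) ∧
      (¬ ∃ i j k, i < j ∧ j < k ∧ k < π.length ∧
          π.getD j 0 < π.getD k 0 ∧ π.getD k 0 < π.getD i 0) := by
  have hlen : π.length = n := by simpa using h.length_eq
  constructor
  · intro hpop
    have hlay : Stmt17.Layered 1 π := Stmt17.layered_of_popStack hpop
    have hnp := Stmt17.layered_not_pat hlay
    constructor
    · rw [Stmt17.pat_iff (fun x y z => z < x ∧ x < y) π]
      exact hnp.1
    · rw [Stmt17.pat_iff (fun x y z => y < z ∧ z < x) π]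
      exact hnp.2
  · rintro ⟨h1, h2⟩
    have hp231 : ¬ Stmt17.Pat231 π := fun hp =>
      h1 ((Stmt17.pat_iff (fun x y z => z < x ∧ x < y) π).2 hp)
    have hp312 : ¬ Stmt17.Pat312 π := fun hp =>
      h2 ((Stmt17.pat_iff (fun x y z => y < z ∧ z < x) π).2 hp)
    have hlay := Stmt17.layered_of_avoid n 1 π h hp231 hp312
    have hps := Stmt17.popStack_layered hlay
    rw [hps, hlen]
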